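/- Let S and A be nonempty finite sets with |S| = n, let P be an n×n real row-stochastic matrix (indexed by S), let γ ∈ ℝ with 0 ≤ γ < 1, and let r ∈ ℝ^S. For each s ∈ S let π(·|s) be a probability mass function on A, let ξ : S × A → ℝ be nonnegative, and let Δ : S → ℝ satisfy Δ(s) > 0 for all s ∈ S. Define Vπ := (I − γP)⁻¹·r, the error vector e(s) := −α·Δ(s) + ∑_{a∈A} π(a|s)·ξ(s,a), and V∞ := Vπ + (I − γP)⁻¹·e. If α ≥ (max_{s∈S, a∈A} ξ(s,a)) · (max_{s∈S} (Δ(s))⁻¹), then V∞(s) ≤ Vπ(s) for every s ∈ S. -/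
import Mathlib


open Finset Matrix

theorem epq_underestimation
    {S A : Type*} [Fintype S] [Nonempty S] [DecidableEq S] [Fintype A] [Nonempty A]
    (P : Matrix S S ℝ)
    (hP0 : ∀ s s', 0 ≤ P s s') (hP1 : ∀ s, ∑ s', P s s' = 1)
    (γ : ℝ) (hγ0 : 0 ≤ γ) (hγ1 : γ < 1)
    (r : S → ℝ)
    (π : S → A → ℝ)
    (hπ0 : ∀ s a, 0 ≤ π s a) (hπ1 : ∀ s, ∑ a, π s a = 1)
    (ξ : S → A → ℝ) (hξ : ∀ s a, 0 ≤ ξ s a)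
    (Δ : S → ℝ) (hΔ : ∀ s, 0 < Δ s)
    (α : ℝ)
    (hα : (Finset.univ.sup' Finset.univ_nonempty fun p : S × A => ξ p.1 p.2) *
        (Finset.univ.sup' Finset.univ_nonempty fun s : S => (Δ s)⁻¹) ≤ α)
    (Vπ : S → ℝ) (hVπ : Vπ = (1 - γ • P)⁻¹.mulVec r)
    (e : S → ℝ) (he : ∀ s, e s = -α * Δ s + ∑ a, π s a * ξ s a)
    (Vinf : S → ℝ) (hVinf : Vinf = Vπ + (1 - γ • P)⁻¹.mulVec e) :
    ∀ s, Vinf s ≤ Vπ s := by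
  set M := (Finset.univ.sup' Finset.univ_nonempty fun p : S × A => ξ p.1 p.2) with hM
  have hM0 : 0 ≤ M := by
    obtain ⟨p, _, hp⟩ := Finset.exists_mem_eq_sup' Finset.univ_nonempty
      (fun p : S × A => ξ p.1 p.2)
    rw [hM, hp]; exact hξ _ _
  -- e ≤ 0
  have he0 : ∀ s, e s ≤ 0 := by
    intro s
    have h1 : ∑ a, π s a * ξ s a ≤ M := by
      calc ∑ a, π s a * ξ s a ≤ ∑ a, π s a * M := by
            apply Finset.sum_le_sum
            intro a _
            exact mul_le_mul_of_nonneg_left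
              (Finset.le_sup' (fun p : S × A => ξ p.1 p.2) (Finset.mem_univ (s, a)))
              (hπ0 s a)
        _ = M := by rw [← Finset.sum_mul, hπ1, one_mul]
    have h2 : M ≤ α * Δ s := by
      have hinv : (Δ s)⁻¹ ≤ Finset.univ.sup' Finset.univ_nonempty fun s : S => (Δ s)⁻¹ :=
        Finset.le_sup' (fun t : S => (Δ t)⁻¹) (Finset.mem_univ s)
      have : M * (Δ s)⁻¹ ≤ α :=
        le_trans (mul_le_mul_of_nonneg_left hinv hM0) hα
      calc M = M * (Δ s)⁻¹ * Δ s := by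
            rw [mul_assoc, inv_mul_cancel₀ (hΔ s).ne', mul_one]
        _ ≤ α * Δ s := mul_le_mul_of_nonneg_right this (hΔ s).le
    rw [he]; linarith
  -- the correction is nonpositive
  set B : Matrix S S ℝ := 1 - γ • P with hB
  set x : S → ℝ := B⁻¹.mulVec e with hx
  have hxle : ∀ s, x s ≤ 0 := by
    by_cases hdet : IsUnit B.det
    · have hBx : B.mulVec x = e := by
        rw [hx, Matrix.mulVec_mulVec, Matrix.mul_nonsing_inv B hdet, Matrix.one_mulVec]
      have hrec : ∀ s, x s = e s + γ * ∑ s', P s s' * x s' := by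
        intro s
        have := congrFun hBx s
        simp [hB, Matrix.mulVec, dotProduct, Matrix.sub_apply, Matrix.one_apply,
          sub_mul, Finset.sum_sub_distrib, Finset.mul_sum, mul_assoc] at this
        rw [Finset.mul_sum]
        linarith [this]
      obtain ⟨s₀, _, hs₀⟩ := Finset.exists_max_image Finset.univ x ⟨Classical.arbitrary S, Finset.mem_univ _⟩
      have hsum : ∑ s', P s₀ s' * x s' ≤ x s₀ := by
        calc ∑ s', P s₀ s' * x s' ≤ ∑ s', P s₀ s' * x s₀ :=
              Finset.sum_le_sum fun s' _ =>
                mul_le_mul_of_nonneg_left (hs₀ s' (Finset.mem_univ s')) (hP0 s₀ s')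
          _ = x s₀ := by rw [← Finset.sum_mul, hP1, one_mul]
      have hle : x s₀ ≤ γ * x s₀ := by
        have := hrec s₀
        nlinarith [he0 s₀, mul_le_mul_of_nonneg_left hsum hγ0]
      have hs0 : x s₀ ≤ 0 := by nlinarith
      intro s
      exact le_trans (hs₀ s (Finset.mem_univ s)) hs0
    · intro s
      rw [hx, Matrix.nonsing_inv_apply_not_isUnit B hdet]
      simp [Matrix.mulVec]
  intro s
  rw [hVinf]
  simp only [Pi.add_apply]
  linarith [hxle s]
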